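/- Let (r_n)_{n≥0} be a strictly decreasing sequence of positive rational numbers with r_n → 0, and let (u_n)_{n≥0} be a family with u_n ∈ A_{r_n}^× for all n. Suppose there exist a real number δ > 0 and an integer N such that for every n ≥ N one can write u_n = 1 + Σ_{k≥1} c_{n,k} T^k with v_p(c_{n,k}) + k·r_n ≥ δ for all k ≥ 1. Then there exist v_n ∈ A_{r_n}^× with u_n = v_{n+1}·v_n^{−1} in A_{r_n} for all n ≥ 0; equivalently, the class of (u_n)_n in the Picard group of the open unit ball is zero. -/

import Mathlib

/-!
Statement 14: with `C` and the Tate algebras `A_{rₙ}` as in the context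
(`rₙ` a strictly decreasing sequence of positive rationals tending to `0`),
if `uₙ ∈ A_{rₙ}^×` and there are `δ > 0` and `N` such that for `n ≥ N` one has
`uₙ = 1 + ∑_{k ≥ 1} c_{n,k} T^k` with `v_p(c_{n,k}) + k·rₙ ≥ δ` for all
`k ≥ 1` (i.e. `‖c_{n,k}‖·p^{-k·rₙ} ≤ p^{-δ}`), then the class of `(uₙ)ₙ` in
the Picard group of the open unit ball is zero: there exist `vₙ ∈ A_{rₙ}^×`
with `uₙ = v_{n+1}·vₙ⁻¹` in `A_{rₙ}` for all `n`.
-/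

open Filter Topology

/-- Membership in the Tate algebra `A_r` of the closed ball `{v_p(T) ≥ r}`. -/
def MemTate (p : ℕ) {C : Type*} [NormedField C] (r : ℚ) (f : PowerSeries C) : Prop :=
  Tendsto (fun k : ℕ => ‖PowerSeries.coeff k f‖ * (p : ℝ) ^ (-(r : ℝ) * k))
    atTop (𝓝 0)

/-- `f` is a unit of the Tate algebra `A_r` (a subring of `C[[T]]`). -/
def IsTateUnit (p : ℕ) {C : Type*} [NormedField C] (r : ℚ) (f : PowerSeries C) : Prop :=
  MemTate p r f ∧ ∃ g : PowerSeries C, MemTate p r g ∧ f * g = 1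

set_option linter.unusedSectionVars false
set_option linter.unusedVariables false

namespace Stmt14

variable {C : Type*} [NontriviallyNormedField C] [IsUltrametricDist C]

/-- weighted coefficient seminorm -/
noncomputable def wc (q ρ : ℝ) (f : PowerSeries C) (k : ℕ) : ℝ :=
  ‖PowerSeries.coeff k f‖ * q ^ (-ρ * (k : ℝ))

lemma wc_nonneg {q : ℝ} (hq : 0 < q) (ρ : ℝ) (f : PowerSeries C) (k : ℕ) : 0 ≤ wc q ρ f k :=
  mul_nonneg (norm_nonneg _) (Real.rpow_pos_of_pos hq _).le

lemma norm_coeff_le {q : ℝ} (hq : 0 < q) {ρ : ℝ} {f : PowerSeries C} {k : ℕ} {a : ℝ}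
    (h : wc q ρ f k ≤ a) : ‖PowerSeries.coeff k f‖ ≤ a * q ^ (ρ * (k : ℝ)) := by
  have hpos : (0:ℝ) < q ^ (ρ * (k:ℝ)) := Real.rpow_pos_of_pos hq _
  have h2 := mul_le_mul_of_nonneg_right h hpos.le
  rw [wc, mul_assoc, ← Real.rpow_add hq] at h2
  simpa using h2

lemma wc_le_of_norm_coeff_le {q : ℝ} (hq : 0 < q) {ρ : ℝ} {f : PowerSeries C} {k : ℕ} {a : ℝ}
    (h : ‖PowerSeries.coeff k f‖ ≤ a * q ^ (ρ * (k : ℝ))) : wc q ρ f k ≤ a := by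
  have hpos : (0:ℝ) < q ^ (-ρ * (k:ℝ)) := Real.rpow_pos_of_pos hq _
  have h2 := mul_le_mul_of_nonneg_right h hpos.le
  rw [mul_assoc, ← Real.rpow_add hq] at h2
  rw [wc]
  simpa using h2

lemma wc_zero (q ρ : ℝ) {f : PowerSeries C} {k : ℕ} (h : PowerSeries.coeff k f = 0) :
    wc q ρ f k = 0 := by
  simp [wc, h]

lemma wc_one_zero (q ρ : ℝ) : wc (C := C) q ρ 1 0 = 1 := by
  simp [wc, Real.rpow_zero]

lemma wc_one_le {q ρ : ℝ} (hq : 0 < q) (k : ℕ) : wc (C := C) q ρ 1 k ≤ 1 := by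
  rcases Nat.eq_zero_or_pos k with rfl | hk
  · simp [wc_one_zero]
  · rw [wc_zero]
    · norm_num
    · simp [PowerSeries.coeff_one, hk.ne']

lemma wc_neg (q ρ : ℝ) (f : PowerSeries C) (k : ℕ) : wc q ρ (-f) k = wc q ρ f k := by
  simp [wc]

lemma wc_mul_exists {q : ℝ} (hq : 0 < q) (ρ : ℝ) (f g : PowerSeries C) (k : ℕ) :
    ∃ x : ℕ × ℕ, x.1 + x.2 = k ∧ wc q ρ (f * g) k ≤ wc q ρ f x.1 * wc q ρ g x.2 := by
  have hne : (Finset.HasAntidiagonal.antidiagonal k).Nonempty := ⟨(0, k), by simp⟩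
  obtain ⟨x, hxmem, hxle⟩ := IsUltrametricDist.exists_norm_finset_sum_le_of_nonempty hne
    (fun x : ℕ × ℕ => PowerSeries.coeff x.1 f * PowerSeries.coeff x.2 g)
  have hx : x.1 + x.2 = k := Finset.HasAntidiagonal.mem_antidiagonal.mp hxmem
  refine ⟨x, hx, ?_⟩
  have h1 : ‖PowerSeries.coeff k (f * g)‖ ≤
      ‖PowerSeries.coeff x.1 f‖ * ‖PowerSeries.coeff x.2 g‖ := by
    rw [PowerSeries.coeff_mul]
    exact hxle.trans (norm_mul_le _ _)
  have hw : q ^ (-ρ * (k:ℝ)) = q ^ (-ρ * (x.1:ℝ)) * q ^ (-ρ * (x.2:ℝ)) := by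
    rw [← Real.rpow_add hq]
    congr 1
    have : ((x.1 + x.2 : ℕ) : ℝ) = (x.1:ℝ) + (x.2:ℝ) := by push_cast; ring
    rw [← hx]
    push_cast
    ring
  have hwpos : (0:ℝ) ≤ q ^ (-ρ * (k:ℝ)) := (Real.rpow_pos_of_pos hq _).le
  calc wc q ρ (f * g) k = ‖PowerSeries.coeff k (f * g)‖ * q ^ (-ρ * (k:ℝ)) := rfl
    _ ≤ (‖PowerSeries.coeff x.1 f‖ * ‖PowerSeries.coeff x.2 g‖) * q ^ (-ρ * (k:ℝ)) :=
        mul_le_mul_of_nonneg_right h1 hwpos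
    _ = wc q ρ f x.1 * wc q ρ g x.2 := by rw [hw, wc, wc]; ring

lemma wc_mul_le {q : ℝ} (hq : 0 < q) {ρ a b : ℝ} {f g : PowerSeries C}
    (ha : ∀ i, wc q ρ f i ≤ a) (hb : ∀ j, wc q ρ g j ≤ b) (k : ℕ) :
    wc q ρ (f * g) k ≤ a * b := by
  obtain ⟨x, -, h⟩ := wc_mul_exists hq ρ f g k
  exact h.trans (mul_le_mul (ha _) (hb _) (wc_nonneg hq _ _ _) ((wc_nonneg hq ρ f 0).trans (ha 0)))

lemma wc_add_le (q ρ : ℝ) (f g : PowerSeries C) (k : ℕ)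
    (hw : 0 ≤ q ^ (-ρ * (k:ℝ))) :
    wc q ρ (f + g) k ≤ max (wc q ρ f k) (wc q ρ g k) := by
  have : ‖PowerSeries.coeff k (f + g)‖ ≤
      max ‖PowerSeries.coeff k f‖ ‖PowerSeries.coeff k g‖ := by
    rw [map_add]
    exact IsUltrametricDist.norm_add_le_max _ _
  calc wc q ρ (f + g) k ≤ max ‖PowerSeries.coeff k f‖ ‖PowerSeries.coeff k g‖
        * q ^ (-ρ * (k:ℝ)) := mul_le_mul_of_nonneg_right this hw
    _ = max (wc q ρ f k) (wc q ρ g k) := by rw [max_mul_of_nonneg _ _ hw]; rfl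

end Stmt14
set_option linter.unusedSectionVars false
set_option linter.unusedVariables false
set_option maxHeartbeats 1000000

namespace Stmt14

variable {C : Type*} [NontriviallyNormedField C] [IsUltrametricDist C]

lemma coeff_zero_of_mul_one {f g : PowerSeries C} (hfg : f * g = 1)
    (hf0 : PowerSeries.coeff 0 f = 1) : PowerSeries.coeff 0 g = 1 := by
  have h := congrArg (PowerSeries.constantCoeff) hfg
  rw [map_mul, map_one] at h
  rw [PowerSeries.coeff_zero_eq_constantCoeff] at hf0 ⊢
  rw [hf0, one_mul] at h
  exact h

/-- key recursion: for `k ≥ 1`, the `k`-th coefficient of `g` is minus the sum over the rest of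
the antidiagonal. -/
lemma wc_recursion {q : ℝ} (hq : 0 < q) {ρ : ℝ} {f g : PowerSeries C}
    (hfg : f * g = 1) (hf0 : PowerSeries.coeff 0 f = 1) {k : ℕ} (hk : 1 ≤ k) :
    ∃ x : ℕ × ℕ, x.1 + x.2 = k ∧ 1 ≤ x.1 ∧ x.2 < k ∧
      wc q ρ g k ≤ wc q ρ f x.1 * wc q ρ g x.2 := by
  classical
  have hmem : ((0 : ℕ), k) ∈ Finset.HasAntidiagonal.antidiagonal k := by simp
  have h0 : PowerSeries.coeff k (f * g) = 0 := by
    rw [hfg, PowerSeries.coeff_one, if_neg (by omega)]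
  rw [PowerSeries.coeff_mul, ← Finset.add_sum_erase _ _ hmem] at h0
  simp only [hf0, one_mul] at h0
  have hgk : PowerSeries.coeff k g =
      -∑ x ∈ (Finset.HasAntidiagonal.antidiagonal k).erase (0, k),
        PowerSeries.coeff x.1 f * PowerSeries.coeff x.2 g := by
    linear_combination h0
  have hne : ((Finset.HasAntidiagonal.antidiagonal k).erase ((0:ℕ), k)).Nonempty := by
    refine ⟨(k, 0), Finset.mem_erase.mpr ⟨?_, by simp⟩⟩
    simp only [ne_eq, Prod.mk.injEq, not_and]
    intro h
    omega
  obtain ⟨x, hxmem, hxle⟩ := IsUltrametricDist.exists_norm_finset_sum_le_of_nonempty hne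
    (fun x : ℕ × ℕ => PowerSeries.coeff x.1 f * PowerSeries.coeff x.2 g)
  obtain ⟨hxne, hxd⟩ := Finset.mem_erase.mp hxmem
  have hx : x.1 + x.2 = k := Finset.HasAntidiagonal.mem_antidiagonal.mp hxd
  have hx1 : 1 ≤ x.1 := by
    rcases Nat.eq_zero_or_pos x.1 with h1 | h1
    · exfalso; apply hxne; ext <;> omega
    · exact h1
  refine ⟨x, hx, hx1, by omega, ?_⟩
  have h1 : ‖PowerSeries.coeff k g‖ ≤
      ‖PowerSeries.coeff x.1 f‖ * ‖PowerSeries.coeff x.2 g‖ := by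
    rw [hgk, norm_neg]
    exact hxle.trans (norm_mul_le _ _)
  have hw : q ^ (-ρ * (k:ℝ)) = q ^ (-ρ * (x.1:ℝ)) * q ^ (-ρ * (x.2:ℝ)) := by
    rw [← Real.rpow_add hq]
    congr 1
    rw [← hx]
    push_cast
    ring
  have hwpos : (0:ℝ) ≤ q ^ (-ρ * (k:ℝ)) := (Real.rpow_pos_of_pos hq _).le
  calc wc q ρ g k ≤ (‖PowerSeries.coeff x.1 f‖ * ‖PowerSeries.coeff x.2 g‖)
        * q ^ (-ρ * (k:ℝ)) := mul_le_mul_of_nonneg_right h1 hwpos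
    _ = wc q ρ f x.1 * wc q ρ g x.2 := by rw [hw, wc, wc]; ring

/-- bound for the coefficients of the inverse of `1 + (small)`. -/
lemma wc_inv_bound {q : ℝ} (hq : 0 < q) {ρ c : ℝ} {f g : PowerSeries C}
    (hfg : f * g = 1) (hf0 : PowerSeries.coeff 0 f = 1) (hc1 : c ≤ 1)
    (hf : ∀ k, 1 ≤ k → wc q ρ f k ≤ c) :
    ∀ k, wc q ρ g k ≤ 1 ∧ (1 ≤ k → wc q ρ g k ≤ c) := by
  have hg0 : PowerSeries.coeff 0 g = 1 := coeff_zero_of_mul_one hfg hf0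
  intro k
  induction k using Nat.strong_induction_on with
  | _ k IH =>
    rcases Nat.eq_zero_or_pos k with rfl | hk
    · constructor
      · simp [wc, hg0]
      · omega
    · obtain ⟨x, hx, hx1, hx2, hle⟩ := wc_recursion hq hfg hf0 hk
      have hbound : wc q ρ g k ≤ c := by
        refine hle.trans ?_
        have h2 := mul_le_mul (hf _ hx1) ((IH x.2 hx2).1) (wc_nonneg hq _ _ _)
            ((wc_nonneg hq ρ f 1).trans (hf 1 le_rfl))
        simpa using h2
      exact ⟨hbound.trans hc1, fun _ => hbound⟩

/-- geometric decay of the coefficients of the inverse of a polynomial `1 + (small of degree ≤ D)`;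
in particular the inverse is in every Tate algebra. -/
lemma wc_inv_poly_decay {q : ℝ} (hq : 0 < q) {ρ c : ℝ} {f g : PowerSeries C} {D : ℕ}
    (hfg : f * g = 1) (hf0 : PowerSeries.coeff 0 f = 1) (hc0 : 0 ≤ c) (hc1 : c ≤ 1)
    (hf : ∀ k, 1 ≤ k → wc q ρ f k ≤ c)
    (hD : ∀ k, D < k → PowerSeries.coeff k f = 0) :
    ∀ k, wc q ρ g k ≤ c ^ (k / (D + 1)) := by
  have hg0 : PowerSeries.coeff 0 g = 1 := coeff_zero_of_mul_one hfg hf0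
  have hall := wc_inv_bound hq hfg hf0 hc1 hf
  intro k
  induction k using Nat.strong_induction_on with
  | _ k IH =>
    rcases Nat.eq_zero_or_pos k with rfl | hk
    · simp [wc, hg0]
    · obtain ⟨x, hx, hx1, hx2, hle⟩ := wc_recursion hq hfg hf0 hk
      rcases le_or_gt x.1 D with hxD | hxD
      · -- term with f-index ≤ D
        have hstep : wc q ρ g k ≤ c * c ^ (x.2 / (D + 1)) :=
          hle.trans (mul_le_mul (hf _ hx1) (IH x.2 hx2) (wc_nonneg hq _ _ _)
            ((wc_nonneg hq ρ f 1).trans (hf 1 le_rfl)))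
        refine hstep.trans ?_
        rw [← pow_succ']
        apply pow_le_pow_of_le_one hc0 hc1
        -- k / (D+1) ≤ x.2 / (D+1) + 1
        have h1 : k ≤ x.2 + (D + 1) := by omega
        calc k / (D + 1) ≤ (x.2 + (D + 1)) / (D + 1) := Nat.div_le_div_right h1
          _ = x.2 / (D + 1) + 1 := Nat.add_div_right _ (by omega)
      · -- f-coefficient vanishes
        have : wc q ρ f x.1 = 0 := wc_zero _ _ (hD _ hxD)
        have h0 : wc q ρ g k ≤ 0 := by
          refine hle.trans ?_
          rw [this, zero_mul]
        exact h0.trans (pow_nonneg hc0 _)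

end Stmt14
namespace Stmt14

variable {C : Type*} [NontriviallyNormedField C] [IsUltrametricDist C]

lemma wc_mono {q : ℝ} (hq : 1 < q) {ρ ρ' : ℝ} (h : ρ' ≤ ρ) (f : PowerSeries C) (k : ℕ) :
    wc q ρ f k ≤ wc q ρ' f k := by
  apply mul_le_mul_of_nonneg_left _ (norm_nonneg _)
  rw [Real.rpow_le_rpow_left_iff hq]
  have : (0:ℝ) ≤ (k:ℝ) := Nat.cast_nonneg _
  nlinarith

lemma tendsto_wc_mono {q : ℝ} (hq : 1 < q) {ρ ρ' : ℝ} (h : ρ' ≤ ρ) {f : PowerSeries C}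
    (hf : Filter.Tendsto (wc q ρ' f) Filter.atTop (nhds 0)) :
    Filter.Tendsto (wc q ρ f) Filter.atTop (nhds 0) :=
  squeeze_zero (fun k => wc_nonneg (lt_trans one_pos hq) ρ f k) (wc_mono hq h f) hf

lemma tendsto_wc_of_poly {q ρ : ℝ} {f : PowerSeries C} {D : ℕ}
    (hD : ∀ k, D < k → PowerSeries.coeff k f = 0) :
    Filter.Tendsto (wc q ρ f) Filter.atTop (nhds 0) := by
  apply Filter.Tendsto.congr' _ tendsto_const_nhds
  filter_upwards [Filter.eventually_atTop.mpr ⟨D + 1, fun k hk => hk⟩] with k hk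
  exact (wc_zero q ρ (hD k (by omega))).symm

lemma tendsto_wc_one {q ρ : ℝ} :
    Filter.Tendsto (wc (C := C) q ρ 1) Filter.atTop (nhds 0) :=
  tendsto_wc_of_poly (D := 0) (fun k hk => by simp [PowerSeries.coeff_one]; omega)

lemma tendsto_wc_mul {q : ℝ} (hq : 1 < q) {ρ : ℝ} {f g : PowerSeries C}
    (hf : Filter.Tendsto (wc q ρ f) Filter.atTop (nhds 0))
    (hg : Filter.Tendsto (wc q ρ g) Filter.atTop (nhds 0)) :
    Filter.Tendsto (wc q ρ (f * g)) Filter.atTop (nhds 0) := by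
  have hq0 : (0:ℝ) < q := lt_trans one_pos hq
  obtain ⟨Cf, hCf⟩ := (hf.bddAbove_range : BddAbove _)
  obtain ⟨Cg, hCg⟩ := (hg.bddAbove_range : BddAbove _)
  have hCf' : ∀ i, wc q ρ f i ≤ Cf := fun i => hCf ⟨i, rfl⟩
  have hCg' : ∀ j, wc q ρ g j ≤ Cg := fun j => hCg ⟨j, rfl⟩
  have hCf0 : 0 ≤ Cf := (wc_nonneg hq0 ρ f 0).trans (hCf' 0)
  have hCg0 : 0 ≤ Cg := (wc_nonneg hq0 ρ g 0).trans (hCg' 0)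
  rw [Metric.tendsto_atTop]
  intro ε hε
  set B := max Cf Cg + 1 with hB
  have hB0 : 0 < B := by positivity
  have hε' : 0 < ε / B := div_pos hε hB0
  obtain ⟨K₁, hK₁⟩ := (Metric.tendsto_atTop.mp hf) (ε / B) hε'
  obtain ⟨K₂, hK₂⟩ := (Metric.tendsto_atTop.mp hg) (ε / B) hε'
  refine ⟨K₁ + K₂, fun k hk => ?_⟩
  rw [Real.dist_eq, sub_zero, abs_of_nonneg (wc_nonneg hq0 _ _ _)]
  obtain ⟨x, hx, hle⟩ := wc_mul_exists hq0 ρ f g k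
  refine lt_of_le_of_lt hle ?_
  have hcase : K₁ ≤ x.1 ∨ K₂ ≤ x.2 := by omega
  have hfx : ∀ i, K₁ ≤ i → wc q ρ f i < ε / B := by
    intro i hi
    have := hK₁ i hi
    rwa [Real.dist_eq, sub_zero, abs_of_nonneg (wc_nonneg hq0 _ _ _)] at this
  have hgx : ∀ j, K₂ ≤ j → wc q ρ g j < ε / B := by
    intro j hj
    have := hK₂ j hj
    rwa [Real.dist_eq, sub_zero, abs_of_nonneg (wc_nonneg hq0 _ _ _)] at this
  have hBgt : ∀ y, wc q ρ f y ≤ B ∧ wc q ρ g y ≤ B := by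
    intro y
    constructor
    · refine (hCf' y).trans ?_; rw [hB]; refine le_trans (le_max_left _ Cg) (by linarith)
    · refine (hCg' y).trans ?_; rw [hB]; refine le_trans (le_max_right Cf _) (by linarith)
  rcases hcase with hc | hc
  · calc wc q ρ f x.1 * wc q ρ g x.2 ≤ wc q ρ f x.1 * B :=
          mul_le_mul_of_nonneg_left (hBgt x.2).2 (wc_nonneg hq0 _ _ _)
      _ < (ε / B) * B := by
          apply mul_lt_mul_of_pos_right (hfx _ hc) hB0
      _ = ε := div_mul_cancel₀ ε hB0.ne'
  · calc wc q ρ f x.1 * wc q ρ g x.2 ≤ B * wc q ρ g x.2 :=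
          mul_le_mul_of_nonneg_right (hBgt x.1).1 (wc_nonneg hq0 _ _ _)
      _ < B * (ε / B) := by
          apply mul_lt_mul_of_pos_left (hgx _ hc) hB0
      _ = ε := mul_div_cancel₀ ε hB0.ne'

lemma tendsto_wc_prod {q : ℝ} (hq : 1 < q) {ρ : ℝ} (s : Finset ℕ) (f : ℕ → PowerSeries C)
    (h : ∀ m ∈ s, Filter.Tendsto (wc q ρ (f m)) Filter.atTop (nhds 0)) :
    Filter.Tendsto (wc q ρ (∏ m ∈ s, f m)) Filter.atTop (nhds 0) := by
  classical
  induction s using Finset.induction_on with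
  | empty => simpa using (tendsto_wc_one (q := q) (ρ := ρ) (C := C))
  | @insert a s' hx ih =>
    rw [Finset.prod_insert hx]
    exact tendsto_wc_mul hq (h a (Finset.mem_insert_self a s'))
      (ih (fun m hm => h m (Finset.mem_insert_of_mem hm)))

/-- In an ultrametric space, consecutive bounds give Cauchy-type bounds. -/
lemma norm_sub_le_of_consec {x : ℕ → C} {M : ℕ} {ε : ℝ}
    (h : ∀ j, M ≤ j → ‖x (j + 1) - x j‖ ≤ ε) :
    ∀ M', M ≤ M' → ‖x M' - x M‖ ≤ ε := by
  have hε0 : 0 ≤ ε := le_trans (norm_nonneg _) (h M le_rfl)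
  intro M' hM'
  induction M' , hM' using Nat.le_induction with
  | base => simpa using hε0
  | succ n hn ih =>
    have : x (n + 1) - x M = (x (n + 1) - x n) + (x n - x M) := by ring
    rw [this]
    exact le_trans (IsUltrametricDist.norm_add_le_max _ _) (max_le (h n hn) ih)

end Stmt14
namespace Stmt14

open Filter Topology

variable {C : Type*} [NontriviallyNormedField C] [IsUltrametricDist C] [CompleteSpace C]

/-- The main limit package: an infinite product of factors `G m` (for `m ≥ n`) which are
`1 + (small)`, with deviations bounded by an antitone null sequence `η`, converges
coefficientwise to a power series `Z` which is bounded by `1` and lies in the Tate algebra. -/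
lemma prod_limit {q : ℝ} (hq : 1 < q) {ρ : ℝ} (G : ℕ → PowerSeries C)
    (n : ℕ) (η : ℕ → ℝ)
    (hG0 : ∀ m, n ≤ m → PowerSeries.coeff 0 (G m) = 1)
    (hGb : ∀ m, n ≤ m → ∀ k, 1 ≤ k → wc q ρ (G m) k ≤ η m)
    (hη0 : ∀ m, 0 ≤ η m) (hη1 : ∀ m, n ≤ m → η m ≤ 1)
    (hηmono : ∀ a b, n ≤ a → a ≤ b → η b ≤ η a)
    (hηlim : Tendsto η atTop (𝓝 0))
    (hGmem : ∀ m, n ≤ m → Tendsto (wc q ρ (G m)) atTop (𝓝 0)) :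
    ∃ Z : PowerSeries C,
      (∀ k, Tendsto (fun M => PowerSeries.coeff k (∏ m ∈ Finset.Icc n M, G m)) atTop
        (𝓝 (PowerSeries.coeff k Z))) ∧
      (∀ k, wc q ρ Z k ≤ 1) ∧
      Tendsto (wc q ρ Z) atTop (𝓝 0) := by
  have hq0 : (0:ℝ) < q := lt_trans one_pos hq
  set Y : ℕ → PowerSeries C := fun M => ∏ m ∈ Finset.Icc n M, G m with hY
  -- each factor is bounded by 1
  have hG1 : ∀ m, n ≤ m → ∀ k, wc q ρ (G m) k ≤ 1 := by
    intro m hm k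
    rcases Nat.eq_zero_or_pos k with rfl | hk
    · simp [wc, hG0 m hm]
    · exact (hGb m hm k hk).trans (hη1 m hm)
  -- partial products bounded by 1
  have hY1 : ∀ M k, wc q ρ (Y M) k ≤ 1 := by
    intro M
    induction M with
    | zero =>
      rcases Nat.eq_zero_or_pos n with rfl | hn
      · intro k
        have : Y 0 = G 0 := by simp [hY]
        rw [this]
        exact hG1 0 le_rfl k
      · intro k
        have : Y 0 = 1 := by
          rw [hY]
          simp only
          rw [Finset.Icc_eq_empty (by omega), Finset.prod_empty]
        rw [this]
        exact wc_one_le hq0 k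
    | succ M ih =>
      by_cases hnM : n ≤ M + 1
      · have hstep : Y (M + 1) = Y M * G (M + 1) := Finset.prod_Icc_succ_top hnM G
        intro k
        rw [hstep]
        simpa using wc_mul_le hq0 ih (hG1 (M+1) hnM) k
      · intro k
        have : Y (M+1) = 1 := by
          rw [hY]; simp only
          rw [Finset.Icc_eq_empty (by omega), Finset.prod_empty]
        rw [this]
        exact wc_one_le hq0 k
  -- deviation of factors
  have hGdev : ∀ m, n ≤ m → ∀ j, wc q ρ (G m - 1) j ≤ η m := by
    intro m hm j
    rcases Nat.eq_zero_or_pos j with rfl | hj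
    · rw [wc_zero]
      · exact hη0 m
      · rw [map_sub, hG0 m hm, PowerSeries.coeff_one]
        simp
    · have : PowerSeries.coeff j (G m - 1) = PowerSeries.coeff j (G m) := by
        rw [map_sub, PowerSeries.coeff_one, if_neg (by omega), sub_zero]
      rw [wc, this]
      exact hGb m hm j hj
  -- consecutive differences
  have hdiff : ∀ M, n ≤ M + 1 → ∀ k,
      ‖PowerSeries.coeff k (Y (M+1)) - PowerSeries.coeff k (Y M)‖
        ≤ η (M+1) * q ^ (ρ * (k:ℝ)) := by
    intro M hnM k
    have key : Y (M+1) - Y M = Y M * (G (M+1) - 1) := by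
      by_cases hM : n ≤ M
      · have hY' : Y (M+1) = Y M * G (M+1) := Finset.prod_Icc_succ_top hnM G
        rw [hY', mul_sub, mul_one]
      · have h1 : Y M = 1 := by
          rw [hY]; simp only
          rw [Finset.Icc_eq_empty hM, Finset.prod_empty]
        have h2 : Y (M+1) = G (M+1) := by
          have : n = M + 1 := by omega
          rw [hY]; simp only [this]
          rw [Finset.Icc_self, Finset.prod_singleton]
        rw [h1, h2, one_mul]
      -- done
    have hwc : wc q ρ (Y (M+1) - Y M) k ≤ η (M+1) := by
      rw [key]
      simpa using wc_mul_le hq0 (hY1 M) (hGdev (M+1) hnM) k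
    have := norm_coeff_le hq0 hwc
    rwa [map_sub] at this
  -- Cauchy and limits
  have hcauchy : ∀ k, CauchySeq (fun M => PowerSeries.coeff k (Y M)) := by
    intro k
    rw [Metric.cauchySeq_iff']
    intro ε hε
    have hqk : (0:ℝ) < q ^ (ρ * (k:ℝ)) := Real.rpow_pos_of_pos hq0 _
    have htend : Tendsto (fun m => η m * q ^ (ρ * (k:ℝ))) atTop (𝓝 0) := by
      simpa using hηlim.mul_const (q ^ (ρ * (k:ℝ)))
    obtain ⟨a, ha⟩ := (Metric.tendsto_atTop.mp htend) ε hε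
    refine ⟨max a n, fun M' hM' => ?_⟩
    set N₀ := max a n with hN₀
    have hconsec : ∀ j, N₀ ≤ j →
        ‖PowerSeries.coeff k (Y (j+1)) - PowerSeries.coeff k (Y j)‖
          ≤ η (N₀ + 1) * q ^ (ρ * (k:ℝ)) := by
      intro j hj
      refine (hdiff j (by omega) k).trans ?_
      apply mul_le_mul_of_nonneg_right _ hqk.le
      exact hηmono (N₀ + 1) (j + 1) (by omega) (by omega)
    have := norm_sub_le_of_consec (x := fun M => PowerSeries.coeff k (Y M)) hconsec M' hM'
    rw [dist_eq_norm]
    refine lt_of_le_of_lt this ?_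
    have := ha (N₀ + 1) (by omega)
    rw [Real.dist_eq, sub_zero] at this
    calc η (N₀+1) * q ^ (ρ * (k:ℝ)) ≤ |η (N₀+1) * q ^ (ρ * (k:ℝ))| := le_abs_self _
      _ < ε := this
  have hlim : ∀ k, ∃ L, Tendsto (fun M => PowerSeries.coeff k (Y M)) atTop (𝓝 L) :=
    fun k => cauchySeq_tendsto_of_complete (hcauchy k)
  choose L hL using hlim
  refine ⟨PowerSeries.mk L, ?_, ?_, ?_⟩
  · intro k
    rw [PowerSeries.coeff_mk]
    exact hL k
  · -- boundedness of Z
    intro k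
    apply wc_le_of_norm_coeff_le hq0
    rw [PowerSeries.coeff_mk]
    refine le_of_tendsto (hL k).norm (Filter.Eventually.of_forall fun M => ?_)
    simpa using norm_coeff_le hq0 (hY1 M k)
  · -- MemTate of Z
    set Z := PowerSeries.mk L with hZ
    have hZdiff : ∀ M, n ≤ M → ∀ k, wc q ρ (Z - Y M) k ≤ η (M+1) := by
      intro M hM k
      apply wc_le_of_norm_coeff_le hq0
      rw [map_sub, hZ, PowerSeries.coeff_mk]
      have htend2 : Tendsto (fun M' => ‖PowerSeries.coeff k (Y M')
          - PowerSeries.coeff k (Y M)‖) atTop (𝓝 ‖L k - PowerSeries.coeff k (Y M)‖) :=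
        ((hL k).sub tendsto_const_nhds).norm
      refine le_of_tendsto htend2 ?_
      filter_upwards [Filter.eventually_atTop.mpr ⟨M, fun b hb => hb⟩] with M' hM'
      have hconsec : ∀ j, M ≤ j →
          ‖PowerSeries.coeff k (Y (j+1)) - PowerSeries.coeff k (Y j)‖
            ≤ η (M + 1) * q ^ (ρ * (k:ℝ)) := by
        intro j hj
        refine (hdiff j (by omega) k).trans ?_
        apply mul_le_mul_of_nonneg_right _ (Real.rpow_pos_of_pos hq0 _).le
        exact hηmono (M + 1) (j + 1) (by omega) (by omega)
      exact norm_sub_le_of_consec (x := fun M' => PowerSeries.coeff k (Y M')) hconsec M' hM'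
    rw [Metric.tendsto_atTop]
    intro ε hε
    obtain ⟨a, ha⟩ := (Metric.tendsto_atTop.mp hηlim) (ε/2) (by linarith)
    set M := max a n with hM
    have hηM : η (M+1) < ε/2 := by
      have := ha (M+1) (by omega)
      rw [Real.dist_eq, sub_zero] at this
      exact lt_of_le_of_lt (le_abs_self _) this
    have hYMmem : Tendsto (wc q ρ (Y M)) atTop (𝓝 0) := by
      apply tendsto_wc_prod hq
      intro m hm
      exact hGmem m (Finset.mem_Icc.mp hm).1
    obtain ⟨K, hK⟩ := (Metric.tendsto_atTop.mp hYMmem) (ε/2) (by linarith)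
    refine ⟨K, fun k hk => ?_⟩
    rw [Real.dist_eq, sub_zero, abs_of_nonneg (wc_nonneg hq0 _ _ _)]
    have hsplit : wc q ρ Z k = wc q ρ ((Z - Y M) + Y M) k := by
      congr 1
      ring
    rw [hsplit]
    refine lt_of_le_of_lt (wc_add_le q ρ _ _ k (Real.rpow_pos_of_pos hq0 _).le) ?_
    apply max_lt
    · exact lt_of_le_of_lt (hZdiff M (by omega) k) (by linarith)
    · have := hK k hk
      rw [Real.dist_eq, sub_zero, abs_of_nonneg (wc_nonneg hq0 _ _ _)] at this
      linarith

end Stmt14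
namespace Stmt14

open Filter Topology

variable {C : Type*} [NontriviallyNormedField C] [IsUltrametricDist C]

lemma coeff_zero_mul (f g : PowerSeries C) :
    PowerSeries.coeff 0 (f * g) = PowerSeries.coeff 0 f * PowerSeries.coeff 0 g := by
  simp [PowerSeries.coeff_mul]

lemma tendsto_coeff_mul {A B : ℕ → PowerSeries C} {A' B' : PowerSeries C}
    (hA : ∀ k, Tendsto (fun M => PowerSeries.coeff k (A M)) atTop
      (𝓝 (PowerSeries.coeff k A')))
    (hB : ∀ k, Tendsto (fun M => PowerSeries.coeff k (B M)) atTop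
      (𝓝 (PowerSeries.coeff k B'))) (k : ℕ) :
    Tendsto (fun M => PowerSeries.coeff k (A M * B M)) atTop
      (𝓝 (PowerSeries.coeff k (A' * B'))) := by
  simp only [PowerSeries.coeff_mul]
  exact tendsto_finset_sum _ (fun x _ => (hA x.1).mul (hB x.2))

lemma tendsto_nat_div_const_atTop (B : ℕ) (hB : 0 < B) :
    Tendsto (fun k : ℕ => k / B) atTop atTop := by
  apply tendsto_atTop_atTop_of_monotone (fun a b hab => Nat.div_le_div_right hab)
  intro b
  exact ⟨b * B, le_of_eq (Nat.mul_div_cancel b hB).symm⟩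

lemma tendsto_pow_nat_div {c : ℝ} (hc0 : 0 ≤ c) (hc1 : c < 1) (B : ℕ) (hB : 0 < B) :
    Tendsto (fun k : ℕ => c ^ (k / B)) atTop (𝓝 0) :=
  (tendsto_pow_atTop_nhds_zero_of_lt_one hc0 hc1).comp (tendsto_nat_div_const_atTop B hB)

/-- Tate-membership of the inverse of a "polynomial" `1 + small`. -/
lemma tendsto_wc_inv_poly {q : ℝ} (hq : 1 < q) {ρ c : ℝ} {f g : PowerSeries C} {D : ℕ}
    (hfg : f * g = 1) (hf0 : PowerSeries.coeff 0 f = 1) (hc0 : 0 ≤ c) (hc1 : c < 1)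
    (hf : ∀ k, 1 ≤ k → wc q ρ f k ≤ c)
    (hD : ∀ k, D < k → PowerSeries.coeff k f = 0) :
    Tendsto (wc q ρ g) atTop (𝓝 0) := by
  have hq0 : (0:ℝ) < q := lt_trans one_pos hq
  apply squeeze_zero (fun k => wc_nonneg hq0 ρ g k)
    (wc_inv_poly_decay hq0 hfg hf0 hc0 hc1.le hf hD)
  exact tendsto_pow_nat_div hc0 hc1 (D+1) (by omega)

end Stmt14

open Stmt14 in
theorem picard_class_of_small_units_trivial (p : ℕ) (hp : p.Prime)
    (C : Type*) [NontriviallyNormedField C] [IsAlgClosed C] [CompleteSpace C]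
    [IsUltrametricDist C]
    (hnorm : ‖(p : C)‖ = (p : ℝ)⁻¹)
    (hval : ∀ x : C, x ≠ 0 → ∃ q : ℚ, ‖x‖ = (p : ℝ) ^ (-(q : ℝ)))
    (hval' : ∀ q : ℚ, ∃ x : C, x ≠ 0 ∧ ‖x‖ = (p : ℝ) ^ (-(q : ℝ)))
    (r : ℕ → ℚ) (hr_pos : ∀ n, 0 < r n) (hr_anti : StrictAnti r)
    (hr_lim : Tendsto (fun n => ((r n : ℝ))) atTop (𝓝 0))
    (u : ℕ → PowerSeries C)
    (hu : ∀ n, IsTateUnit p (r n) (u n))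
    (hδ : ∃ δ : ℝ, 0 < δ ∧ ∃ N : ℕ, ∀ n ≥ N,
      PowerSeries.coeff 0 (u n) = 1 ∧
      ∀ k : ℕ, 1 ≤ k →
        ‖PowerSeries.coeff k (u n)‖ * (p : ℝ) ^ (-(r n : ℝ) * k) ≤ (p : ℝ) ^ (-δ)) :
    ∃ v : ℕ → PowerSeries C,
      (∀ n, IsTateUnit p (r n) (v n)) ∧ ∀ n, u n * v n = v (n + 1) := by
  classical
  obtain ⟨δ, hδpos, N, hN⟩ := hδ
  choose uinv huinv_mem huinv_mul using fun n => (hu n).2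
  have hq : (1:ℝ) < (p:ℝ) := by exact_mod_cast hp.one_lt
  have hq0 : (0:ℝ) < (p:ℝ) := lt_trans one_pos hq
  set q : ℝ := (p:ℝ) with hqdef
  set ρ : ℕ → ℝ := fun n => ((r n : ℝ)) with hρdef
  have hρpos : ∀ n, 0 < ρ n := fun n => by
    simp only [hρdef]
    exact_mod_cast hr_pos n
  have hρanti : ∀ m n : ℕ, m ≤ n → ρ n ≤ ρ m := fun m n h => by
    simp only [hρdef]
    rcases eq_or_lt_of_le h with rfl | h'
    · exact le_rfl
    · exact_mod_cast (hr_anti h').le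
  -- conversion between MemTate and wc-tendsto
  have memTate_eq : ∀ (s : ℚ) (f : PowerSeries C),
      MemTate p s f = Tendsto (wc q ((s : ℝ)) f) atTop (𝓝 0) := fun s f => rfl
  -- hypotheses from hδ in wc language
  have hu0 : ∀ m, N ≤ m → PowerSeries.coeff 0 (u m) = 1 := fun m hm => (hN m hm).1
  have hub : ∀ m, N ≤ m → ∀ k, 1 ≤ k → wc q (ρ m) (u m) k ≤ q ^ (-δ) :=
    fun m hm => (hN m hm).2
  set ε : ℝ := q ^ (-δ) with hεdef
  have hε0 : 0 < ε := Real.rpow_pos_of_pos hq0 _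
  have hε1 : ε < 1 := Real.rpow_lt_one_of_one_lt_of_neg hq (by linarith)
  set ε' : ℝ := q ^ (-(δ/2)) with hε'def
  have hε'0 : 0 < ε' := Real.rpow_pos_of_pos hq0 _
  have hε'1 : ε' < 1 := Real.rpow_lt_one_of_one_lt_of_neg hq (by linarith)
  -- truncation degrees
  set D : ℕ → ℕ := fun m => ⌊δ / (2 * ρ m)⌋₊ with hDdef
  have hDle : ∀ m, (D m : ℝ) * ρ m ≤ δ / 2 := by
    intro m
    have hρm := (hρpos m).ne'
    have h1 : (D m : ℝ) ≤ δ / (2 * ρ m) :=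
      Nat.floor_le (le_of_lt (div_pos hδpos (by have := hρpos m; linarith)))
    have h2 := mul_le_mul_of_nonneg_right h1 (hρpos m).le
    calc (D m : ℝ) * ρ m ≤ (δ / (2 * ρ m)) * ρ m := h2
      _ = δ / 2 := by field_simp
  have hDmono : ∀ a b, a ≤ b → D a ≤ D b := by
    intro a b hab
    apply Nat.floor_mono
    apply div_le_div_of_nonneg_left hδpos.le (by have := hρpos b; linarith)
    have := hρanti a b hab
    linarith
  have hDtop : Tendsto D atTop atTop := by
    have h1 : Tendsto (fun m => δ / (2 * ρ m)) atTop atTop := by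
      have h2 : Tendsto ρ atTop (𝓝[>] 0) := by
        rw [tendsto_nhdsWithin_iff]
        exact ⟨hr_lim, Filter.Eventually.of_forall fun n => hρpos n⟩
      have h3 : Tendsto (fun m => (ρ m)⁻¹) atTop atTop := tendsto_inv_nhdsGT_zero.comp h2
      have h4 : Tendsto (fun m => (δ/2) * (ρ m)⁻¹) atTop atTop :=
        h3.const_mul_atTop (by linarith)
      apply h4.congr
      intro m
      field_simp
    exact tendsto_nat_floor_atTop.comp h1
  -- truncated polynomials
  set P : ℕ → PowerSeries C := fun m =>
    PowerSeries.mk (fun k => if k ≤ D m then PowerSeries.coeff k (u m) else 0) with hPdef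
  have hPdeg : ∀ m k, D m < k → PowerSeries.coeff k (P m) = 0 := by
    intro m k hk
    rw [hPdef]
    simp only [PowerSeries.coeff_mk]
    rw [if_neg (by omega)]
  have hP0 : ∀ m, N ≤ m → PowerSeries.coeff 0 (P m) = 1 := by
    intro m hm
    rw [hPdef]
    simp only [PowerSeries.coeff_mk]
    rw [if_pos (by omega)]
    exact hu0 m hm
  -- uniform smallness of P m - 1 at every nonneg level
  have hPb : ∀ m, N ≤ m → ∀ σ : ℝ, 0 ≤ σ → ∀ k, 1 ≤ k → wc q σ (P m) k ≤ ε' := by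
    intro m hm σ hσ k hk
    by_cases hkD : k ≤ D m
    · have hco : PowerSeries.coeff k (P m) = PowerSeries.coeff k (u m) := by
        rw [hPdef]; simp only [PowerSeries.coeff_mk]; rw [if_pos hkD]
      have h1 : ‖PowerSeries.coeff k (u m)‖ ≤ ε * q ^ (ρ m * (k:ℝ)) :=
        norm_coeff_le hq0 (hub m hm k hk)
      have h2 : wc q σ (P m) k ≤ ‖PowerSeries.coeff k (u m)‖ := by
        rw [wc, hco]
        have : q ^ (-σ * (k:ℝ)) ≤ 1 := by
          apply Real.rpow_le_one_of_one_le_of_nonpos hq.le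
          have : (0:ℝ) ≤ (k:ℝ) := Nat.cast_nonneg _
          nlinarith
        nlinarith [norm_nonneg (PowerSeries.coeff k (u m)), this]
      refine h2.trans (h1.trans ?_)
      rw [hεdef, ← Real.rpow_add hq0, hε'def]
      rw [Real.rpow_le_rpow_left_iff hq]
      have hkDm : (k:ℝ) * ρ m ≤ (D m : ℝ) * ρ m := by
        apply mul_le_mul_of_nonneg_right _ (hρpos m).le
        exact_mod_cast hkD
      have := hDle m
      nlinarith
    · rw [wc_zero _ _ (hPdeg m k (by omega))]
      exact hε'0.le
  -- inverse of P m
  set Pinv : ℕ → PowerSeries C := fun m => (P m).invOfUnit 1 with hPinvdef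
  have hPinv : ∀ m, N ≤ m → P m * Pinv m = 1 := by
    intro m hm
    apply PowerSeries.mul_invOfUnit
    rw [← PowerSeries.coeff_zero_eq_constantCoeff_apply, hP0 m hm, Units.val_one]
  have hPinvb : ∀ m, N ≤ m → ∀ σ : ℝ, 0 ≤ σ → ∀ k, wc q σ (Pinv m) k ≤ 1 := by
    intro m hm σ hσ k
    exact (wc_inv_bound hq0 (hPinv m hm) (hP0 m hm) hε'1.le (hPb m hm σ hσ) k).1
  have hPinvmem : ∀ m, N ≤ m → ∀ σ : ℝ, 0 ≤ σ →
      Tendsto (wc q σ (Pinv m)) atTop (𝓝 0) := by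
    intro m hm σ hσ
    exact tendsto_wc_inv_poly hq (hPinv m hm) (hP0 m hm) hε'0.le hε'1
      (hPb m hm σ hσ) (hPdeg m)
  -- bounds for u and uinv at earlier levels
  have hub' : ∀ n m, N ≤ n → n ≤ m → ∀ k, 1 ≤ k → wc q (ρ n) (u m) k ≤ ε := by
    intro n m hn hnm k hk
    exact (wc_mono hq (hρanti n m hnm) (u m) k).trans (hub m (by omega) k hk)
  have huinvb : ∀ n m, N ≤ n → n ≤ m → ∀ k, wc q (ρ n) (uinv m) k ≤ 1 := by
    intro n m hn hnm k
    exact (wc_inv_bound hq0 (huinv_mul m) (hu0 m (by omega)) hε1.le (hub' n m hn hnm) k).1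
  -- the tail bound
  set η : ℕ → ℕ → ℝ := fun n m => ε * q ^ (-((D m : ℝ) + 1) * (ρ n - ρ m)) with hηdef
  have hη0 : ∀ n m, 0 < η n m := fun n m => mul_pos hε0 (Real.rpow_pos_of_pos hq0 _)
  have hη1 : ∀ n m, n ≤ m → η n m ≤ ε := by
    intro n m hnm
    rw [hηdef]
    simp only
    have h1 : q ^ (-((D m : ℝ) + 1) * (ρ n - ρ m)) ≤ 1 := by
      apply Real.rpow_le_one_of_one_le_of_nonpos hq.le
      have h2 : ρ m ≤ ρ n := hρanti n m hnm
      nlinarith [Nat.cast_nonneg (α := ℝ) (D m)]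
    nlinarith [hε0]
  have htail : ∀ n m, N ≤ n → n ≤ m → ∀ j, wc q (ρ n) (u m - P m) j ≤ η n m := by
    intro n m hn hnm j
    by_cases hjD : j ≤ D m
    · rw [wc_zero]
      · exact (hη0 n m).le
      · rw [map_sub, hPdef]
        simp only [PowerSeries.coeff_mk]
        rw [if_pos hjD, sub_self]
    · have hco : PowerSeries.coeff j (u m - P m) = PowerSeries.coeff j (u m) := by
        rw [map_sub, hPdeg m j (by omega), sub_zero]
      have hj1 : 1 ≤ j := by omega
      have h1 : wc q (ρ m) (u m) j ≤ ε := hub m (by omega) j hj1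
      rw [wc, hco]
      have hsplit : q ^ (-(ρ n) * (j:ℝ)) =
          q ^ (-(ρ m) * (j:ℝ)) * q ^ (-(ρ n - ρ m) * (j:ℝ)) := by
        rw [← Real.rpow_add hq0]
        ring_nf
      rw [hsplit, ← mul_assoc]
      have h2 : ‖PowerSeries.coeff j (u m)‖ * q ^ (-(ρ m) * (j:ℝ)) ≤ ε := h1
      have h3 : q ^ (-(ρ n - ρ m) * (j:ℝ)) ≤ q ^ (-((D m : ℝ) + 1) * (ρ n - ρ m)) := by
        rw [Real.rpow_le_rpow_left_iff hq]
        have h4 : ρ m ≤ ρ n := hρanti n m hnm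
        have h5 : ((D m : ℝ) + 1) ≤ (j : ℝ) := by
          have : (D m) + 1 ≤ j := by omega
          exact_mod_cast this
        nlinarith
    -- combine
      rw [hηdef]
      simp only
      have hw0 : (0:ℝ) ≤ q ^ (-(ρ n - ρ m) * (j:ℝ)) := (Real.rpow_pos_of_pos hq0 _).le
      have hn0 : (0:ℝ) ≤ ‖PowerSeries.coeff j (u m)‖ * q ^ (-(ρ m) * (j:ℝ)) := by positivity
      nlinarith [h2, h3, hε0]
  -- monotonicity of η in m
  have hηmono : ∀ n a b, n ≤ a → a ≤ b → η n b ≤ η n a := by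
    intro n a b hna hab
    rw [hηdef]
    simp only
    apply mul_le_mul_of_nonneg_left _ hε0.le
    rw [Real.rpow_le_rpow_left_iff hq]
    have h1 : (D a : ℝ) ≤ (D b : ℝ) := by exact_mod_cast hDmono a b hab
    have h2 : ρ b ≤ ρ a := hρanti a b hab
    have h3 : ρ a ≤ ρ n := hρanti n a hna
    have h4 : (0:ℝ) ≤ (D a : ℝ) := Nat.cast_nonneg _
    nlinarith
  -- η tends to 0
  have hηlim : ∀ n, Tendsto (η n) atTop (𝓝 0) := by
    intro n
    have hβpos : (0:ℝ) < ρ n - ρ (n+1) := by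
      have h1 : r (n+1) < r n := hr_anti (Nat.lt_succ_self n)
      have h2 : ((r (n+1) : ℝ)) < ((r n : ℝ)) := by exact_mod_cast h1
      simp only [hρdef]
      linarith
    set β : ℝ := q ^ (-(ρ n - ρ (n+1))) with hβdef
    have hβ0 : 0 ≤ β := (Real.rpow_pos_of_pos hq0 _).le
    have hβ1 : β < 1 := Real.rpow_lt_one_of_one_lt_of_neg hq (by linarith)
    have hbound : ∀ m, n + 1 ≤ m → η n m ≤ ε * β ^ (D m + 1) := by
      intro m hm
      rw [hηdef]
      simp only
      apply mul_le_mul_of_nonneg_left _ hε0.le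
      have hpow : β ^ (D m + 1) = q ^ (-(ρ n - ρ (n+1)) * ((D m : ℝ) + 1)) := by
        rw [hβdef, ← Real.rpow_natCast (q ^ (-(ρ n - ρ (n+1)))) (D m + 1),
          ← Real.rpow_mul hq0.le]
        congr 1
        push_cast
        ring
      rw [hpow, Real.rpow_le_rpow_left_iff hq]
      have h2 : ρ m ≤ ρ (n+1) := hρanti (n+1) m hm
      have h4 : (0:ℝ) ≤ (D m : ℝ) := Nat.cast_nonneg _
      nlinarith
    have hgeom : Tendsto (fun m => ε * β ^ (D m + 1)) atTop (𝓝 0) := by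
      have h1 : Tendsto (fun m => D m + 1) atTop atTop :=
        tendsto_atTop_mono (fun m => Nat.le_succ (D m)) hDtop
      have h2 : Tendsto (fun m => β ^ (D m + 1)) atTop (𝓝 0) :=
        (tendsto_pow_atTop_nhds_zero_of_lt_one hβ0 hβ1).comp h1
      simpa using h2.const_mul ε
    apply squeeze_zero' (Filter.Eventually.of_forall fun m => (hη0 n m).le)
      _ hgeom
    filter_upwards [Filter.eventually_ge_atTop (n+1)] with m hm
    exact hbound m hm
  -- the factors of the two infinite products
  set F : ℕ → PowerSeries C := fun m => uinv m * P m with hFdef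
  set F' : ℕ → PowerSeries C := fun m => Pinv m * u m with hF'def
  have huinv0 : ∀ m, N ≤ m → PowerSeries.coeff 0 (uinv m) = 1 :=
    fun m hm => coeff_zero_of_mul_one (huinv_mul m) (hu0 m hm)
  have hPinv0 : ∀ m, N ≤ m → PowerSeries.coeff 0 (Pinv m) = 1 :=
    fun m hm => coeff_zero_of_mul_one (hPinv m hm) (hP0 m hm)
  have hF0 : ∀ m, N ≤ m → PowerSeries.coeff 0 (F m) = 1 := by
    intro m hm
    rw [hFdef]
    simp only
    rw [coeff_zero_mul, huinv0 m hm, hP0 m hm, one_mul]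
  have hF'0 : ∀ m, N ≤ m → PowerSeries.coeff 0 (F' m) = 1 := by
    intro m hm
    rw [hF'def]
    simp only
    rw [coeff_zero_mul, hPinv0 m hm, hu0 m hm, one_mul]
  have huinvmem' : ∀ m, Tendsto (wc q (ρ m) (uinv m)) atTop (𝓝 0) := fun m => huinv_mem m
  have humem' : ∀ m, Tendsto (wc q (ρ m) (u m)) atTop (𝓝 0) := fun m => (hu m).1
  have hFdev : ∀ n m, N ≤ n → n ≤ m → ∀ k, 1 ≤ k → wc q (ρ n) (F m) k ≤ η n m := by
    intro n m hn hnm k hk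
    have hm : N ≤ m := le_trans hn hnm
    have h1 : uinv m * u m = 1 := by rw [mul_comm]; exact huinv_mul m
    have hrel : uinv m * (u m - P m) = 1 - F m := by
      rw [hFdef]
      simp only
      rw [mul_sub, h1]
    have hco : PowerSeries.coeff k (F m)
        = - PowerSeries.coeff k (uinv m * (u m - P m)) := by
      rw [hrel, map_sub, PowerSeries.coeff_one, if_neg (by omega), zero_sub, neg_neg]
    have heq : wc q (ρ n) (F m) k = wc q (ρ n) (uinv m * (u m - P m)) k := by
      rw [wc, wc, hco, norm_neg]
    rw [heq]
    have := wc_mul_le hq0 (huinvb n m hn hnm) (htail n m hn hnm) k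
    simpa using this
  have hF'dev : ∀ n m, N ≤ n → n ≤ m → ∀ k, 1 ≤ k → wc q (ρ n) (F' m) k ≤ η n m := by
    intro n m hn hnm k hk
    have hm : N ≤ m := le_trans hn hnm
    have h1 : Pinv m * P m = 1 := by rw [mul_comm]; exact hPinv m hm
    have hrel : Pinv m * (u m - P m) = F' m - 1 := by
      rw [hF'def]
      simp only
      rw [mul_sub, h1]
    have hco : PowerSeries.coeff k (F' m)
        = PowerSeries.coeff k (Pinv m * (u m - P m)) := by
      rw [hrel, map_sub, PowerSeries.coeff_one, if_neg (by omega), sub_zero]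
    have heq : wc q (ρ n) (F' m) k = wc q (ρ n) (Pinv m * (u m - P m)) k := by
      rw [wc, wc, hco]
    rw [heq]
    have := wc_mul_le hq0 (hPinvb m hm (ρ n) (hρpos n).le) (htail n m hn hnm) k
    simpa using this
  have hFmem : ∀ n m, N ≤ n → n ≤ m → Tendsto (wc q (ρ n) (F m)) atTop (𝓝 0) := by
    intro n m hn hnm
    rw [hFdef]
    simp only
    exact tendsto_wc_mul hq (tendsto_wc_mono hq (hρanti n m hnm) (huinvmem' m))
      (tendsto_wc_of_poly (hPdeg m))
  have hF'mem : ∀ n m, N ≤ n → n ≤ m → Tendsto (wc q (ρ n) (F' m)) atTop (𝓝 0) := by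
    intro n m hn hnm
    have hm : N ≤ m := le_trans hn hnm
    rw [hF'def]
    simp only
    exact tendsto_wc_mul hq (hPinvmem m hm (ρ n) (hρpos n).le)
      (tendsto_wc_mono hq (hρanti n m hnm) (humem' m))
  -- the infinite products
  have hexists : ∀ n, ∃ ZP : PowerSeries C × PowerSeries C, N ≤ n →
      ((∀ k, Tendsto (fun M => PowerSeries.coeff k (∏ m ∈ Finset.Icc n M, F m)) atTop
          (𝓝 (PowerSeries.coeff k ZP.1))) ∧ (∀ k, wc q (ρ n) ZP.1 k ≤ 1) ∧
        Tendsto (wc q (ρ n) ZP.1) atTop (𝓝 0)) ∧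
      ((∀ k, Tendsto (fun M => PowerSeries.coeff k (∏ m ∈ Finset.Icc n M, F' m)) atTop
          (𝓝 (PowerSeries.coeff k ZP.2))) ∧ (∀ k, wc q (ρ n) ZP.2 k ≤ 1) ∧
        Tendsto (wc q (ρ n) ZP.2) atTop (𝓝 0)) := by
    intro n
    by_cases hn : N ≤ n
    · obtain ⟨Z1, hZ1⟩ := prod_limit hq F n (η n)
        (fun m hm => hF0 m (le_trans hn hm)) (fun m hm => hFdev n m hn hm)
        (fun m => (hη0 n m).le) (fun m hm => ((hη1 n m hm).trans hε1.le))
        (fun a b ha hab => hηmono n a b ha hab) (hηlim n)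
        (fun m hm => hFmem n m hn hm)
      obtain ⟨Z2, hZ2⟩ := prod_limit hq F' n (η n)
        (fun m hm => hF'0 m (le_trans hn hm)) (fun m hm => hF'dev n m hn hm)
        (fun m => (hη0 n m).le) (fun m hm => ((hη1 n m hm).trans hε1.le))
        (fun a b ha hab => hηmono n a b ha hab) (hηlim n)
        (fun m hm => hF'mem n m hn hm)
      exact ⟨(Z1, Z2), fun _ => ⟨hZ1, hZ2⟩⟩
    · exact ⟨(1, 1), fun h => absurd h hn⟩
  choose Z hZ using hexists
  -- the polynomial prefactors
  set B : ℕ → PowerSeries C := fun n =>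
    if n < N then ∏ m ∈ Finset.Ico n N, uinv m else ∏ m ∈ Finset.Ico N n, P m with hBdef
  set Binv : ℕ → PowerSeries C := fun n =>
    if n < N then ∏ m ∈ Finset.Ico n N, u m else ∏ m ∈ Finset.Ico N n, Pinv m with hBinvdef
  refine ⟨fun n => B n * (Z (max n N)).1, ?_, ?_⟩
  · -- each v n is a Tate unit
    intro n
    have hmax : N ≤ max n N := le_max_right _ _
    have hmax' : n ≤ max n N := le_max_left _ _
    obtain ⟨⟨hZ1t, hZ1b, hZ1m⟩, hZ2t, hZ2b, hZ2m⟩ := hZ (max n N) hmax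
    have hBmem : Tendsto (wc q (ρ n) (B n)) atTop (𝓝 0) := by
      rw [hBdef]
      by_cases hn : n < N
      · simp only [if_pos hn]
        apply tendsto_wc_prod hq
        intro m hm
        exact tendsto_wc_mono hq (hρanti n m (Finset.mem_Ico.mp hm).1) (huinvmem' m)
      · simp only [if_neg hn]
        apply tendsto_wc_prod hq
        intro m hm
        exact tendsto_wc_of_poly (hPdeg m)
    have hBinvmem : Tendsto (wc q (ρ n) (Binv n)) atTop (𝓝 0) := by
      rw [hBinvdef]
      by_cases hn : n < N
      · simp only [if_pos hn]
        apply tendsto_wc_prod hq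
        intro m hm
        exact tendsto_wc_mono hq (hρanti n m (Finset.mem_Ico.mp hm).1) (humem' m)
      · simp only [if_neg hn]
        apply tendsto_wc_prod hq
        intro m hm
        exact hPinvmem m (Finset.mem_Ico.mp hm).1 (ρ n) (hρpos n).le
    have hBB : B n * Binv n = 1 := by
      rw [hBdef, hBinvdef]
      by_cases hn : n < N
      · simp only [if_pos hn]
        rw [← Finset.prod_mul_distrib]
        apply Finset.prod_eq_one
        intro m hm
        rw [mul_comm]
        exact huinv_mul m
      · simp only [if_neg hn]
        rw [← Finset.prod_mul_distrib]
        apply Finset.prod_eq_one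
        intro m hm
        exact hPinv m (Finset.mem_Ico.mp hm).1
    have hZZ : (Z (max n N)).1 * (Z (max n N)).2 = 1 := by
      have hYY : ∀ M : ℕ, (∏ m ∈ Finset.Icc (max n N) M, F m)
          * (∏ m ∈ Finset.Icc (max n N) M, F' m) = 1 := by
        intro M
        rw [← Finset.prod_mul_distrib]
        apply Finset.prod_eq_one
        intro m hm
        have hm' : N ≤ m := le_trans hmax (Finset.mem_Icc.mp hm).1
        have hFF : F m * F' m = (u m * uinv m) * (P m * Pinv m) := by
          rw [hFdef, hF'def]
          ring
        rw [hFF, huinv_mul m, hPinv m hm', one_mul]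
      apply PowerSeries.ext
      intro k
      have t1 := tendsto_coeff_mul hZ1t hZ2t k
      have t2 : Tendsto (fun M => PowerSeries.coeff k
          ((∏ m ∈ Finset.Icc (max n N) M, F m) * (∏ m ∈ Finset.Icc (max n N) M, F' m)))
          atTop (𝓝 (PowerSeries.coeff k 1)) := by
        apply tendsto_const_nhds.congr
        intro M
        rw [hYY M]
      exact tendsto_nhds_unique t1 t2
    constructor
    · -- MemTate
      show Tendsto (wc q (ρ n) (B n * (Z (max n N)).1)) atTop (𝓝 0)
      exact tendsto_wc_mul hq hBmem (tendsto_wc_mono hq (hρanti n (max n N) hmax') hZ1m)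
    · refine ⟨Binv n * (Z (max n N)).2, ?_, ?_⟩
      · show Tendsto (wc q (ρ n) (Binv n * (Z (max n N)).2)) atTop (𝓝 0)
        exact tendsto_wc_mul hq hBinvmem (tendsto_wc_mono hq (hρanti n (max n N) hmax') hZ2m)
      · calc B n * (Z (max n N)).1 * (Binv n * (Z (max n N)).2)
            = (B n * Binv n) * ((Z (max n N)).1 * (Z (max n N)).2) := by ring
          _ = 1 := by rw [hBB, hZZ, one_mul]
  · -- exactness
    intro n
    by_cases hn : n < N
    · have hmaxn : max n N = N := max_eq_right (by omega)
      have hmaxn1 : max (n+1) N = N := max_eq_right (by omega)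
      show u n * (B n * (Z (max n N)).1) = B (n + 1) * (Z (max (n + 1) N)).1
      rw [hmaxn, hmaxn1]
      have hB : u n * B n = B (n+1) := by
        rw [hBdef]
        simp only [if_pos hn]
        rw [Finset.prod_eq_prod_Ico_succ_bot hn]
        by_cases hn1 : n + 1 < N
        · rw [if_pos hn1, ← mul_assoc, huinv_mul n, one_mul]
        · have hn1' : n + 1 = N := by omega
          rw [if_neg hn1, hn1', Finset.Ico_self]
          simp [huinv_mul n]
      calc u n * (B n * (Z N).1) = (u n * B n) * (Z N).1 := by ring
        _ = B (n+1) * (Z N).1 := by rw [hB]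
    · have hN' : N ≤ n := by omega
      have hmaxn : max n N = n := max_eq_left hN'
      have hmaxn1 : max (n+1) N = n + 1 := max_eq_left (by omega)
      show u n * (B n * (Z (max n N)).1) = B (n + 1) * (Z (max (n + 1) N)).1
      rw [hmaxn, hmaxn1]
      obtain ⟨⟨hZ1t, -, -⟩, -⟩ := hZ n hN'
      obtain ⟨⟨hZ1t', -, -⟩, -⟩ := hZ (n+1) (by omega)
      have hfin : ∀ M, n ≤ M → (u n * B n) * ∏ m ∈ Finset.Icc n M, F m
          = B (n+1) * ∏ m ∈ Finset.Icc (n+1) M, F m := by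
        intro M hM
        have hsplit : ∏ m ∈ Finset.Icc n M, F m
            = F n * ∏ m ∈ Finset.Icc (n+1) M, F m := by
          rw [← Finset.Ico_add_one_right_eq_Icc, ← Finset.Ico_add_one_right_eq_Icc]
          exact Finset.prod_eq_prod_Ico_succ_bot (by omega) F
        have hBsplit : B (n+1) = B n * P n := by
          rw [hBdef]
          simp only [if_neg (by omega : ¬ n + 1 < N), if_neg (by omega : ¬ n < N)]
          exact Finset.prod_Ico_succ_top hN' P
        rw [hsplit, hBsplit, hFdef]
        simp only
        have hshuffle : u n * B n * (uinv n * P n * ∏ m ∈ Finset.Icc (n+1) M, F m)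
            = (u n * uinv n) * (B n * P n * ∏ m ∈ Finset.Icc (n+1) M, F m) := by
          ring
        rw [hshuffle, huinv_mul n, one_mul]
      apply PowerSeries.ext
      intro k
      have t1 : Tendsto (fun M => PowerSeries.coeff k
          ((u n * B n) * ∏ m ∈ Finset.Icc n M, F m)) atTop
          (𝓝 (PowerSeries.coeff k ((u n * B n) * (Z n).1))) :=
        tendsto_coeff_mul (fun k => tendsto_const_nhds) hZ1t k
      have t2 : Tendsto (fun M => PowerSeries.coeff k
          (B (n+1) * ∏ m ∈ Finset.Icc (n+1) M, F m)) atTop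
          (𝓝 (PowerSeries.coeff k (B (n+1) * (Z (n+1)).1))) :=
        tendsto_coeff_mul (fun k => tendsto_const_nhds) hZ1t' k
      have hcong : (fun M => PowerSeries.coeff k
          ((u n * B n) * ∏ m ∈ Finset.Icc n M, F m)) =ᶠ[atTop]
          (fun M => PowerSeries.coeff k (B (n+1) * ∏ m ∈ Finset.Icc (n+1) M, F m)) := by
        filter_upwards [Filter.eventually_ge_atTop n] with M hM
        rw [hfin M hM]
      have hkey : PowerSeries.coeff k ((u n * B n) * (Z n).1)
          = PowerSeries.coeff k (B (n+1) * (Z (n+1)).1) :=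
        tendsto_nhds_unique (t1.congr' hcong) t2
      calc PowerSeries.coeff k (u n * (B n * (Z n).1))
          = PowerSeries.coeff k ((u n * B n) * (Z n).1) := by rw [mul_assoc]
        _ = PowerSeries.coeff k (B (n+1) * (Z (n+1)).1) := hkey
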